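/- arXiv:0712.2601 — 4 statements merged into one kernel-verified Lean document; each statement's English description precedes it below -/
import Mathlib

section
/- Let G be a group, φ an automorphism of G, Γ = G ⋊_φ ℤ with distinguished generator t, and let F : Γ → K be a surjective homomorphism onto a finite group K. If F separates two conjugacy classes of Γ contained in the coset G·t (i.e., F(x·t) and F(y·t) are not conjugate in K for representatives x·t, y·t of these classes), then x and y are not φ-conjugate in G; moreover the restriction F|_G : G → Im(F|_G) separates the corresponding φ-conjugacy classes: h·x·φ(h)⁻¹ and y have distinct images under F|_G for every h ∈ G, and Ker(F|_G) is invariant under φ. -/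
/-- `x` and `y` are `φ`-conjugate (twisted conjugate): `y = g * x * φ(g)⁻¹` for some `g`. -/
def TwistedConj {G : Type*} [Group G] (φ : MulAut G) (x y : G) : Prop :=
  ∃ g : G, y = g * x * (φ g)⁻¹

/-- The semidirect product `Γ = G ⋊_φ ℤ`, where the generator `t` of the `ℤ`-factor
acts on `G` by `t g t⁻¹ = φ(g)`. -/
abbrev Gamma (G : Type*) [Group G] (φ : MulAut G) :=
  G ⋊[zpowersHom (MulAut G) φ] Multiplicative ℤ

/-- The distinguished generator `t` of the `ℤ`-factor of `Γ`. -/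
noncomputable def tGen (G : Type*) [Group G] (φ : MulAut G) : Gamma G φ :=
  SemidirectProduct.inr (Multiplicative.ofAdd (1 : ℤ))

lemma key_conj {G : Type*} [Group G] (φ : MulAut G) (h x : G) :
    SemidirectProduct.inl h * (SemidirectProduct.inl x * tGen G φ) * (SemidirectProduct.inl h)⁻¹
      = SemidirectProduct.inl (h * x * (φ h)⁻¹) * tGen G φ := by
  ext <;> simp [tGen]

lemma key_aut {G : Type*} [Group G] (φ : MulAut G) (g : G) :
    (SemidirectProduct.inl (φ g) : Gamma G φ)
      = tGen G φ * SemidirectProduct.inl g * (tGen G φ)⁻¹ := by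
  ext <;> simp [tGen]

/-- Let `F : Γ → K` be a surjective homomorphism onto a finite group `K`. If `F`
separates the conjugacy classes of `x·t` and `y·t` in `Γ` (their images are not
conjugate in `K`), then `x` and `y` are not `φ`-conjugate in `G`, the restriction
`F|_G` separates the corresponding `φ`-conjugacy classes (every twisted conjugate
`h·x·φ(h)⁻¹` has image distinct from the image of `y`), and `Ker(F|_G)` is
`φ`-invariant. -/
theorem restriction_separates_twisted_classes
    {G : Type*} [Group G] (φ : MulAut G)
    (K : Type*) [Group K] [Finite K]
    (F : Gamma G φ →* K) (hsurj : Function.Surjective F)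
    (x y : G)
    (hsep : ¬ IsConj (F (SemidirectProduct.inl x * tGen G φ))
        (F (SemidirectProduct.inl y * tGen G φ))) :
    ¬ TwistedConj φ x y ∧
    (∀ h : G, F (SemidirectProduct.inl (h * x * (φ h)⁻¹)) ≠ F (SemidirectProduct.inl y)) ∧
    (∀ g : G, F (SemidirectProduct.inl g) = 1 → F (SemidirectProduct.inl (φ g)) = 1) := by
  have himg : ∀ h : G, IsConj (F (SemidirectProduct.inl x * tGen G φ))
      (F (SemidirectProduct.inl (h * x * (φ h)⁻¹) * tGen G φ)) := by
    intro h
    refine ⟨⟨F (SemidirectProduct.inl h), F (SemidirectProduct.inl h)⁻¹, ?_, ?_⟩, ?_⟩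
    · rw [← map_mul, mul_inv_cancel, map_one]
    · rw [← map_mul, inv_mul_cancel, map_one]
    · show F (SemidirectProduct.inl h) * _ = _ * F (SemidirectProduct.inl h)
      have : SemidirectProduct.inl h * (SemidirectProduct.inl x * tGen G φ)
          = (SemidirectProduct.inl (h * x * (φ h)⁻¹) * tGen G φ) * SemidirectProduct.inl h := by
        rw [← key_conj]; group
      rw [← map_mul, ← map_mul, this]
  refine ⟨?_, ?_, ?_⟩
  · rintro ⟨h, rfl⟩
    exact hsep (himg h)
  · intro h heq
    apply hsep
    have h2 := himg h
    have h3 : F (SemidirectProduct.inl (h * x * (φ h)⁻¹) * tGen G φ)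
        = F (SemidirectProduct.inl y * tGen G φ) := by
      rw [F.map_mul, F.map_mul, heq]
    rw [h3] at h2
    exact h2
  · intro g hg
    rw [key_aut, map_mul, map_mul, hg, mul_one, map_inv, mul_inv_cancel]
end

section
/- Let G be a group and φ an automorphism of G with Reidemeister number R(φ) < ∞. Then G is φ-conjugacy separable if and only if G has property RP(φ), i.e., there exist a finite group K, an automorphism φ_K of K, and a surjective homomorphism F : G → K with F ∘ φ = φ_K ∘ F such that the characteristic function of every φ-conjugacy class of G factors through F as the characteristic function of a subset of K. -/
/-- Twisted conjugacy is an equivalence relation; its classes are the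
`φ`-conjugacy (Reidemeister) classes. -/
def twSetoid (G : Type*) [Group G] (φ : MulAut G) : Setoid G where
  r := TwistedConj φ
  iseqv := by
    refine ⟨fun x => ⟨1, by simp⟩, ?_, ?_⟩
    · rintro x y ⟨g, rfl⟩
      exact ⟨g⁻¹, by simp [mul_assoc]⟩
    · rintro x y z ⟨g, rfl⟩ ⟨h, rfl⟩
      exact ⟨h * g, by simp [mul_assoc]⟩

/-- A finite quotient of `G` respecting `φ` that separates the elements `x` and `y`:
a finite group `K`, an automorphism `φ_K`, and a surjective homomorphism `F : G → K`
with `F ∘ φ = φ_K ∘ F` such that `F x` and `F y` are not `φ_K`-conjugate in `K`. -/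
inductive SepWitness {G : Type*} [Group G] (φ : MulAut G) (x y : G) : Prop where
  | intro (K : Type) [grp : Group K] [fin : Finite K] (φK : MulAut K) (F : G →* K)
      (surj : Function.Surjective F) (comm : ∀ g : G, F (φ g) = φK (F g))
      (sep : ¬ TwistedConj φK (F x) (F y)) : SepWitness φ x y

/-- `G` is `φ`-conjugacy separable: any pair of non-`φ`-conjugate elements of `G`
are non-`φ_K`-conjugate in some finite quotient of `G` respecting `φ`. -/
def PhiConjSep {G : Type*} [Group G] (φ : MulAut G) : Prop :=
  ∀ x y : G, ¬ TwistedConj φ x y → SepWitness φ x y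

/-- Property `RP(φ)`: there exist a finite group `K`, an automorphism `φ_K` of `K`, and
a surjective homomorphism `F : G → K` with `F ∘ φ = φ_K ∘ F` such that the characteristic
function of every `φ`-conjugacy (Reidemeister) class of `G` factors through `F` as the
characteristic function of a subset of `K`. -/
inductive RP {G : Type*} [Group G] (φ : MulAut G) : Prop where
  | intro (K : Type) [grp : Group K] [fin : Finite K] (φK : MulAut K) (F : G →* K)
      (surj : Function.Surjective F) (comm : ∀ g : G, F (φ g) = φK (F g))
      (factors : ∀ x : G, ∃ S : Set K, {g : G | TwistedConj φ x g} = F ⁻¹' S) : RP φ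

section Aux

variable {G : Type*} [Group G] (φ : MulAut G)

/-- Twisted conjugacy modulo a subgroup `N`. -/
def ModConj (N : Subgroup G) (x y : G) : Prop :=
  ∃ g n : G, n ∈ N ∧ y = n * (g * x * (φ g)⁻¹)

variable {φ}

lemma modConj_of_twistedConj {N : Subgroup G} {x y : G} (h : TwistedConj φ x y) :
    ModConj φ N x y := by
  obtain ⟨g, rfl⟩ := h
  exact ⟨g, 1, N.one_mem, by simp⟩

lemma modConj_mono {N M : Subgroup G} (hNM : N ≤ M) {x y : G} (h : ModConj φ N x y) :
    ModConj φ M x y := by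
  obtain ⟨g, n, hn, rfl⟩ := h
  exact ⟨g, n, hNM hn, rfl⟩

lemma modConj_refl (N : Subgroup G) (x : G) : ModConj φ N x x :=
  modConj_of_twistedConj ⟨1, by simp⟩

lemma modConj_symm {N : Subgroup G} [N.Normal] {x y : G}
    (h : ModConj φ N x y) : ModConj φ N y x := by
  obtain ⟨g, n, hn, rfl⟩ := h
  refine ⟨g⁻¹, g⁻¹ * n⁻¹ * g, ?_, ?_⟩
  · simpa using Subgroup.Normal.conj_mem ‹N.Normal› n⁻¹ (N.inv_mem hn) g⁻¹
  · simp [mul_assoc]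

lemma modConj_trans {N : Subgroup G} [N.Normal] {x y z : G}
    (h1 : ModConj φ N x y) (h2 : ModConj φ N y z) : ModConj φ N x z := by
  obtain ⟨g, n, hn, rfl⟩ := h1
  obtain ⟨h, m, hm, rfl⟩ := h2
  refine ⟨h * g, m * (h * n * h⁻¹), N.mul_mem hm (Subgroup.Normal.conj_mem ‹N.Normal› n hn h), ?_⟩
  simp [mul_assoc]

/-- Extract a normal finite-index φ-invariant subgroup from a separation witness. -/
lemma sepWitness_extract {x y : G} (h : SepWitness φ x y) :
    ∃ N : Subgroup G, N.Normal ∧ N.FiniteIndex ∧ (∀ g, g ∈ N ↔ φ g ∈ N) ∧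
      ¬ ModConj φ N x y := by
  obtain ⟨K, φK, F, surj, comm, sep⟩ := h
  refine ⟨F.ker, F.normal_ker, ?_, ?_, ?_⟩
  · have : Finite (G ⧸ F.ker) := Finite.of_equiv _ (QuotientGroup.quotientKerEquivRange F).symm.toEquiv
    exact Subgroup.finiteIndex_of_finite_quotient
  · intro g
    constructor
    · intro hg
      have : F g = 1 := hg
      simp [MonoidHom.mem_ker, comm g, this]
    · intro hg
      have : F (φ g) = 1 := hg
      rw [comm g] at this
      have : F g = 1 := by
        have := congrArg φK.symm this
        simpa using this
      exact this
  · rintro ⟨g, n, hn, rfl⟩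
    apply sep
    refine ⟨F g, ?_⟩
    have hn1 : F n = 1 := hn
    simp [map_mul, hn1, comm g]

end Aux

/-- Suppose `R(φ) < ∞`. Then `G` is `φ`-conjugacy separable if and only if `G`
has property `RP(φ)`. -/
theorem phiConjSep_iff_rp {G : Type*} [Group G] (φ : MulAut G)
    (hR : Finite (Quotient (twSetoid G φ))) :
    PhiConjSep φ ↔ RP φ := by
  constructor
  · intro hSep
    classical
    set Q := Quotient (twSetoid G φ)
    -- index pairs of distinct classes
    let P := {p : Q × Q // p.1 ≠ p.2}
    have hP : ∀ p : P, ¬ TwistedConj φ (Quotient.out p.1.1) (Quotient.out p.1.2) := by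
      rintro ⟨⟨a, b⟩, hab⟩ hc
      exact hab (by
        have := Quotient.sound (s := twSetoid G φ) hc
        simpa [Quotient.out_eq] using this)
    have hN : ∀ p : P, ∃ N : Subgroup G, N.Normal ∧ N.FiniteIndex ∧
        (∀ g, g ∈ N ↔ φ g ∈ N) ∧ ¬ ModConj φ N (Quotient.out p.1.1) (Quotient.out p.1.2) :=
      fun p => sepWitness_extract (hSep _ _ (hP p))
    choose Nf hNorm hFI hInv hSepN using hN
    let N : Subgroup G := ⨅ p : P, Nf p
    haveI : N.Normal :=
      ⟨fun n hn g => Subgroup.mem_iInf.mpr fun p =>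
        (hNorm p).conj_mem n (Subgroup.mem_iInf.mp hn p) g⟩
    haveI : ∀ p : P, (Nf p).FiniteIndex := hFI
    haveI hNFI : N.FiniteIndex := Subgroup.finiteIndex_iInf hFI
    have hNle : ∀ p : P, N ≤ Nf p := fun p => iInf_le _ p
    have hNinv : ∀ g, g ∈ N ↔ φ g ∈ N := by
      intro g
      simp only [N, Subgroup.mem_iInf]
      exact forall_congr' fun p => hInv p g
    -- key: ModConj N implies TwistedConj
    have key : ∀ x g : G, ModConj φ N x g → TwistedConj φ x g := by
      intro x g hmod
      by_contra hng
      have hab : (Quotient.mk (twSetoid G φ) x) ≠ (Quotient.mk (twSetoid G φ) g) := by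
        intro h
        exact hng (Quotient.exact h)
      set p : P := ⟨(Quotient.mk (twSetoid G φ) x, Quotient.mk (twSetoid G φ) g), hab⟩
      haveI := hNorm p
      apply hSepN p
      have h1 : TwistedConj φ (Quotient.out p.1.1) x := @Quotient.mk_out _ (twSetoid G φ) x
      have h2 : TwistedConj φ g (Quotient.out p.1.2) :=
        (twSetoid G φ).symm (@Quotient.mk_out _ (twSetoid G φ) g)
      exact modConj_trans (modConj_of_twistedConj h1)
        (modConj_trans (modConj_mono (hNle p) hmod) (modConj_of_twistedConj h2))
    -- build the finite quotient
    haveI : Finite (G ⧸ N) := Subgroup.finite_quotient_of_finiteIndex (H := N)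
    haveI : Small.{0} (G ⧸ N) := inferInstance
    let K : Type := Shrink.{0} (G ⧸ N)
    haveI : Finite K := Finite.of_equiv _ (equivShrink (G ⧸ N))
    let eM : K ≃* (G ⧸ N) := Shrink.mulEquiv
    have hmap : N.map (φ : G →* G) = N := by
      apply le_antisymm
      · rintro _ ⟨g, hg, rfl⟩
        exact (hNinv g).mp hg
      · intro g hg
        exact ⟨φ⁻¹ g, (hNinv (φ⁻¹ g)).mpr (by simpa using hg), by simp⟩
    let φq : (G ⧸ N) ≃* (G ⧸ N) := QuotientGroup.congr N N (φ : G ≃* G) hmap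
    let φK : MulAut K := eM.trans (φq.trans eM.symm)
    let F : G →* K := eM.symm.toMonoidHom.comp (QuotientGroup.mk' N)
    refine ⟨K, φK, F, ?_, ?_, ?_⟩
    · exact eM.symm.surjective.comp (QuotientGroup.mk'_surjective N)
    · intro g
      show eM.symm (QuotientGroup.mk' N (φ g)) = eM.symm (φq (eM (eM.symm (QuotientGroup.mk' N g))))
      rw [MulEquiv.apply_symm_apply]
      rfl
    · intro x
      refine ⟨F '' {g : G | TwistedConj φ x g}, ?_⟩
      ext g
      simp only [Set.mem_setOf_eq, Set.mem_preimage, Set.mem_image]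
      constructor
      · intro h; exact ⟨g, h, rfl⟩
      · rintro ⟨h, hh, hF⟩
        have hq : QuotientGroup.mk' N h = QuotientGroup.mk' N g := by
          have := congrArg eM hF
          simpa [F] using this
        have hmem : h⁻¹ * g ∈ N := (QuotientGroup.eq (s := N)).mp hq
        apply (twSetoid G φ).trans hh
        apply key
        exact ⟨1, g * h⁻¹, by simpa using Subgroup.Normal.conj_mem ‹N.Normal› _ hmem h,
          by simp [mul_assoc]⟩
  · rintro ⟨K, φK, F, surj, comm, factors⟩ x y hxy
    obtain ⟨S, hS⟩ := factors x
    refine ⟨K, φK, F, surj, comm, ?_⟩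
    rintro ⟨k, hk⟩
    obtain ⟨g, rfl⟩ := surj k
    have hx : F x ∈ S := by
      have : x ∈ {g : G | TwistedConj φ x g} := ⟨1, by simp⟩
      rw [hS] at this; exact this
    have hmem : (g * x * (φ g)⁻¹) ∈ {g' : G | TwistedConj φ x g'} := ⟨g, rfl⟩
    rw [hS] at hmem
    have : F y ∈ S := by
      rw [hk]
      simpa [map_mul, comm g] using hmem
    have : y ∈ F ⁻¹' S := this
    rw [← hS] at this
    exact hxy this
end

section
/- A group G is twisted conjugacy separable (i.e., φ-conjugacy separable for every automorphism φ of G with R(φ) < ∞) if and only if G has property RP, i.e., property RP(φ) holds for every automorphism φ of G with R(φ) < ∞. -/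
section AuxTw

/-- Twisted conjugacy modulo a subgroup `N`. -/
def TwConjMod {G : Type*} [Group G] (φ : MulAut G) (N : Subgroup G) (x y : G) : Prop :=
  ∃ g : G, (g * x * (φ g)⁻¹)⁻¹ * y ∈ N

variable {G : Type*} [Group G] (φ : MulAut G)

lemma twistedConj_refl (x : G) : TwistedConj φ x x := ⟨1, by simp⟩

lemma twistedConj_symm {x y : G} (h : TwistedConj φ x y) : TwistedConj φ y x := by
  obtain ⟨g, rfl⟩ := h
  exact ⟨g⁻¹, by simp [mul_assoc]⟩

lemma twistedConj_trans {x y z : G} (h1 : TwistedConj φ x y) (h2 : TwistedConj φ y z) :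
    TwistedConj φ x z := by
  obtain ⟨g, rfl⟩ := h1
  obtain ⟨h, rfl⟩ := h2
  exact ⟨h * g, by simp [mul_assoc]⟩

lemma twConjMod_of_twistedConj {N : Subgroup G} {x y : G} (h : TwistedConj φ x y) :
    TwConjMod φ N x y := by
  obtain ⟨g, rfl⟩ := h
  exact ⟨g, by rw [inv_mul_cancel]; exact N.one_mem⟩

lemma TwConjMod.trans {N : Subgroup G} (hN : N.Normal) {x y z : G}
    (h1 : TwConjMod φ N x y) (h2 : TwConjMod φ N y z) : TwConjMod φ N x z := by
  obtain ⟨a, ha⟩ := h1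
  obtain ⟨b, hb⟩ := h2
  refine ⟨b * a, ?_⟩
  have key : (b * a * x * (φ (b * a))⁻¹)⁻¹ * z
      = (φ b) * ((a * x * (φ a)⁻¹)⁻¹ * y) * (φ b)⁻¹ * ((b * y * (φ b)⁻¹)⁻¹ * z) := by
    simp only [map_mul, map_inv]; group
  rw [key]
  exact N.mul_mem (hN.conj_mem _ ha _) hb

/-- From a separating witness, extract a suitable normal subgroup of `G`. -/
lemma sepWitness_to_subgroup {x y : G} (h : SepWitness φ x y) :
    ∃ N : Subgroup G, N.Normal ∧ (∀ n ∈ N, φ n ∈ N) ∧ (∀ n ∈ N, φ⁻¹ n ∈ N) ∧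
      Finite (G ⧸ N) ∧ ¬ TwConjMod φ N x y := by
  obtain @⟨K, _, _, φK, F, surj, comm, sep⟩ := h
  refine ⟨F.ker, MonoidHom.normal_ker F, ?_, ?_, ?_, ?_⟩
  · intro n hn
    have h1 : F n = 1 := hn
    simp only [MonoidHom.mem_ker, comm, h1, map_one]
  · intro n hn
    have h1 : F n = 1 := hn
    have h2 : φK (F (φ⁻¹ n)) = φK 1 := by
      rw [← comm, map_one]
      simpa using h1
    exact φK.injective h2
  · exact Finite.of_equiv _ (QuotientGroup.quotientKerEquivRange F).symm.toEquiv
  · rintro ⟨g, hg⟩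
    apply sep
    refine ⟨F g, ?_⟩
    have h1 : F ((g * x * (φ g)⁻¹)⁻¹ * y) = 1 := hg
    rw [map_mul, map_inv, inv_mul_eq_one] at h1
    rw [← h1]
    simp [comm]

end AuxTw


/-- `G` is twisted conjugacy separable (i.e. `φ`-conjugacy separable for every
automorphism `φ` with `R(φ) < ∞`) if and only if `G` has property `RP`, i.e.
`RP(φ)` holds for every automorphism `φ` with `R(φ) < ∞`. -/
theorem twistedConjSep_iff_rp (G : Type*) [Group G] :
    (∀ φ : MulAut G, Finite (Quotient (twSetoid G φ)) → PhiConjSep φ) ↔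
    (∀ φ : MulAut G, Finite (Quotient (twSetoid G φ)) → RP φ) := by
  constructor
  · -- separability implies RP
    intro hsep φ hfin
    haveI := hfin
    have key : ∀ c : Quotient (twSetoid G φ) × Quotient (twSetoid G φ),
        ∃ N : Subgroup G, N.Normal ∧ (∀ n ∈ N, φ n ∈ N) ∧ (∀ n ∈ N, φ⁻¹ n ∈ N) ∧
          Finite (G ⧸ N) ∧
          (¬ TwistedConj φ c.1.out c.2.out → ¬ TwConjMod φ N c.1.out c.2.out) := by
      intro c
      by_cases hc : TwistedConj φ c.1.out c.2.out
      · haveI := QuotientGroup.subsingleton_quotient_top (G := G)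
        exact ⟨⊤, inferInstance, fun n _ => trivial, fun n _ => trivial, inferInstance,
          fun h => absurd hc h⟩
      · obtain ⟨N, h1, h2, h3, h4, h5⟩ :=
          sepWitness_to_subgroup φ (hsep φ hfin _ _ hc)
        exact ⟨N, h1, h2, h3, h4, fun _ => h5⟩
    choose N hNorm hφmem hφinvmem hFin hSep using key
    set M : Subgroup G := ⨅ c, N c with hMdef
    haveI hMnorm : M.Normal := by
      constructor
      intro n hn g
      rw [Subgroup.mem_iInf] at hn ⊢
      exact fun c => (hNorm c).conj_mem _ (hn c) g
    have hMeq : M.map (φ : G →* G) = M := by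
      apply le_antisymm
      · rintro _ ⟨n, hn, rfl⟩
        have hn' : ∀ c, n ∈ N c := fun c => Subgroup.mem_iInf.1 hn c
        exact Subgroup.mem_iInf.2 fun c => hφmem c n (hn' c)
      · intro n hn
        have hn' : ∀ c, n ∈ N c := fun c => Subgroup.mem_iInf.1 hn c
        exact ⟨φ⁻¹ n, Subgroup.mem_iInf.2 fun c => hφinvmem c n (hn' c), by simp⟩
    haveI : ∀ c, Finite (G ⧸ N c) := hFin
    haveI hMfin : Finite (G ⧸ M) :=
      Finite.of_injective _ (Subgroup.quotientiInfEmbedding N).injective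
    haveI : Small.{0} (G ⧸ M) := Countable.toSmall _
    let e : Shrink.{0} (G ⧸ M) ≃* (G ⧸ M) := Shrink.mulEquiv
    let φbar : (G ⧸ M) ≃* (G ⧸ M) := QuotientGroup.congr M M (φ : G ≃* G) hMeq
    let φK : MulAut (Shrink.{0} (G ⧸ M)) := e.trans (φbar.trans e.symm)
    let F : G →* Shrink.{0} (G ⧸ M) := e.symm.toMonoidHom.comp (QuotientGroup.mk' M)
    refine RP.intro (Shrink.{0} (G ⧸ M)) φK F ?_ ?_ ?_
    · exact e.symm.surjective.comp (QuotientGroup.mk'_surjective M)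
    · intro g
      show e.symm (QuotientGroup.mk (φ g)) = e.symm (φbar (e (e.symm (QuotientGroup.mk g))))
      rw [e.apply_symm_apply]
      congr 1
    · intro x
      refine ⟨F '' {g : G | TwistedConj φ x g}, ?_⟩
      ext g
      constructor
      · intro hg
        exact ⟨g, hg, rfl⟩
      · rintro ⟨z, hz, hFz⟩
        show TwistedConj φ x g
        by_contra hxg
        have hzg : z⁻¹ * g ∈ M := by
          have : (QuotientGroup.mk z : G ⧸ M) = QuotientGroup.mk g := e.symm.injective hFz
          exact (QuotientGroup.eq ).mp this
        set p : Quotient (twSetoid G φ) := Quotient.mk (twSetoid G φ) x with hp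
        set q : Quotient (twSetoid G φ) := Quotient.mk (twSetoid G φ) g with hq
        have hxp : TwistedConj φ x p.out := Quotient.exact p.out_eq.symm
        have hgq : TwistedConj φ g q.out := Quotient.exact q.out_eq.symm
        have hne : ¬ TwistedConj φ (p, q).1.out (p, q).2.out := by
          intro h
          exact hxg (twistedConj_trans φ hxp
            (twistedConj_trans φ h (twistedConj_symm φ hgq)))
        have hsepc := hSep (p, q) hne
        apply hsepc
        have hNc := hNorm (p, q)
        refine TwConjMod.trans φ hNc (twConjMod_of_twistedConj φ (twistedConj_symm φ hxp)) ?_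
        refine TwConjMod.trans φ hNc (twConjMod_of_twistedConj φ hz) ?_
        refine TwConjMod.trans φ hNc ?_ (twConjMod_of_twistedConj φ hgq)
        refine ⟨1, ?_⟩
        simpa using Subgroup.mem_iInf.1 hzg (p, q)
  · -- RP implies separability
    intro hrp φ hfin x y hxy
    obtain @⟨K, _, _, φK, F, surj, comm, factors⟩ := hrp φ hfin
    obtain ⟨S, hS⟩ := factors x
    refine SepWitness.intro K φK F surj comm ?_
    rintro ⟨k, hk⟩
    obtain ⟨g, rfl⟩ := surj k
    have hxS : F x ∈ S := by
      have : x ∈ {g : G | TwistedConj φ x g} := twistedConj_refl φ x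
      rw [hS] at this
      exact this
    have hw : g * x * (φ g)⁻¹ ∈ {g : G | TwistedConj φ x g} := ⟨g, rfl⟩
    rw [hS] at hw
    have hFw : F (g * x * (φ g)⁻¹) = F y := by
      rw [hk]
      simp [comm]
    apply hxy
    have hyS : y ∈ F ⁻¹' S := by
      show F y ∈ S
      rw [← hFw]
      exact hw
    rw [← Set.mem_setOf_eq (p := fun g => TwistedConj φ x g), hS]
    exact hyS
end

section
/- Let φ : G → G be an automorphism of a countable discrete twisted conjugacy separable group G such that all Reidemeister numbers R(φⁿ), n ≥ 1, are finite. Then for every n ≥ 1 one has the congruence ∑_{d | n} μ(d) · R(φ^{n/d}) ≡ 0 (mod n), where μ is the Möbius function. -/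
/-- The Reidemeister number of `φ`: the number of `φ`-conjugacy classes. -/
noncomputable def ReidemeisterNumber (G : Type*) [Group G] (φ : MulAut G) : ℕ :=
  Nat.card (Quotient (twSetoid G φ))

/-- `G` is twisted conjugacy separable: `φ`-conjugacy separable for every automorphism
`φ` with `R(φ) < ∞`. -/
def TwistedConjSep (G : Type*) [Group G] : Prop :=
  ∀ φ : MulAut G, Finite (Quotient (twSetoid G φ)) → PhiConjSep φ

/-! ### Auxiliary results -/

section MoebiusDynamics

open Finset Function

lemma moebius_sum_eq (m : ℕ) (hm : m ≠ 0) :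
    (∑ d ∈ m.divisors, (ArithmeticFunction.moebius d : ℤ)) = if m = 1 then 1 else 0 := by
  have h := congrArg (fun f : ArithmeticFunction ℤ => f m) ArithmeticFunction.moebius_mul_coe_zeta
  simp only [ArithmeticFunction.mul_apply, ArithmeticFunction.one_apply] at h
  rw [← h, Nat.sum_divisorsAntidiagonal
    (fun a b => (ArithmeticFunction.moebius a : ℤ) *
      ((ArithmeticFunction.zeta : ArithmeticFunction ℕ) : ArithmeticFunction ℤ) b)]
  refine Finset.sum_congr rfl fun d hd => ?_
  rw [Nat.mem_divisors] at hd
  have hd0 : d ≠ 0 := fun h0 => by subst h0; exact hm (Nat.eq_zero_of_zero_dvd hd.1)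
  have hne : m / d ≠ 0 := by
    have := Nat.div_pos (Nat.le_of_dvd (Nat.pos_of_ne_zero hm) hd.1) (Nat.pos_of_ne_zero hd0)
    omega
  rw [ArithmeticFunction.natCoe_apply, ArithmeticFunction.zeta_apply_ne hne]
  simp

lemma iterate_mul_apply {X : Type*} (σ : Equiv.Perm X) {x : X} {n : ℕ}
    (hx : (⇑σ)^[n] x = x) (q : ℕ) : (⇑σ)^[n * q] x = x := by
  induction q with
  | zero => rfl
  | succ q ih => rw [Nat.mul_succ, Function.iterate_add_apply, hx]; exact ih

lemma iterate_mod_apply {X : Type*} (σ : Equiv.Perm X) {x : X} {n : ℕ}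
    (hx : (⇑σ)^[n] x = x) (i : ℕ) : (⇑σ)^[i] x = (⇑σ)^[i % n] x := by
  conv_lhs => rw [← Nat.mod_add_div i n, Function.iterate_add_apply]
  rw [iterate_mul_apply σ hx]

lemma dvd_card_least_period {X : Type*} [Finite X] (σ : Equiv.Perm X) (n : ℕ) (hn : 0 < n) :
    n ∣ Nat.card {x : X // Function.minimalPeriod σ x = n} := by
  classical
  cases nonempty_fintype X
  set T := {x : X // Function.minimalPeriod ⇑σ x = n} with hT
  have hper : ∀ x : T, (⇑σ)^[n] x.1 = x.1 := by
    intro x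
    have := Function.isPeriodicPt_minimalPeriod ⇑σ x.1
    rwa [x.2] at this
  let s : Setoid T :=
    ⟨fun x y => ∃ i : ℕ, (⇑σ)^[i] x.1 = y.1, by
      refine ⟨fun x => ⟨0, rfl⟩, ?_, ?_⟩
      · rintro x y ⟨i, hi⟩
        refine ⟨n - i % n, ?_⟩
        have h1 : (⇑σ)^[i % n] x.1 = y.1 := by rw [← iterate_mod_apply σ (hper x) i, hi]
        rw [← h1, ← Function.iterate_add_apply]
        have h2 : n - i % n + i % n = n := Nat.sub_add_cancel (Nat.le_of_lt (Nat.mod_lt i hn))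
        rw [h2]; exact hper x
      · rintro x y z ⟨i, hi⟩ ⟨j, hj⟩
        exact ⟨j + i, by rw [Function.iterate_add_apply, hi, hj]⟩⟩
  letI : DecidableRel s.r := fun a b => Classical.dec _
  letI : Fintype (Quotient s) := Quotient.fintype s
  have hfiber : ∀ c : Quotient s,
      (Finset.univ.filter fun x : T => Quotient.mk s x = c).card = n := by
    intro c
    obtain ⟨x₀, hx₀⟩ : ∃ x₀ : T, Quotient.mk s x₀ = c := ⟨c.out, Quotient.out_eq c⟩
    have hx₀per : x₀.1 ∈ Function.periodicPts ⇑σ :=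
      Function.minimalPeriod_pos_iff_mem_periodicPts.mp (by rw [x₀.2]; exact hn)
    let u : Fin n → T := fun i =>
      ⟨(⇑σ)^[i.1] x₀.1, by rw [Function.minimalPeriod_apply_iterate hx₀per]; exact x₀.2⟩
    have hinj : Function.Injective u := by
      have key : ∀ i j : Fin n, i.1 ≤ j.1 → u i = u j → i = j := by
        intro i j hij huv
        have h1 : (⇑σ)^[i.1] ((⇑σ)^[j.1 - i.1] x₀.1) = (⇑σ)^[i.1] x₀.1 := by
          rw [← Function.iterate_add_apply]
          have h0 : i.1 + (j.1 - i.1) = j.1 := by omega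
          rw [h0]
          exact congrArg Subtype.val huv.symm
        have h2 : (⇑σ)^[j.1 - i.1] x₀.1 = x₀.1 := (σ.injective.iterate i.1) h1
        have h3 : Function.minimalPeriod ⇑σ x₀.1 ∣ j.1 - i.1 :=
          Function.IsPeriodicPt.minimalPeriod_dvd h2
        rw [x₀.2] at h3
        have h4 : j.1 - i.1 = 0 := by
          rcases Nat.eq_zero_or_pos (j.1 - i.1) with h | h
          · exact h
          · exact absurd (Nat.le_of_dvd h h3) (by omega)
        exact Fin.ext (by omega)
      intro i j huv
      rcases le_total i.1 j.1 with h | h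
      · exact key i j h huv
      · exact (key j i h huv.symm).symm
    have hset : (Finset.univ.filter fun x : T => Quotient.mk s x = c)
        = Finset.image u Finset.univ := by
      ext y
      simp only [Finset.mem_filter, Finset.mem_univ, true_and, Finset.mem_image]
      constructor
      · intro hy
        have hrel : x₀ ≈ y := Quotient.exact (hx₀.trans hy.symm)
        obtain ⟨i, hi⟩ := hrel
        refine ⟨⟨i % n, Nat.mod_lt i hn⟩, ?_⟩
        apply Subtype.ext
        show (⇑σ)^[i % n] x₀.1 = y.1
        rw [← iterate_mod_apply σ (hper x₀) i, hi]
      · rintro ⟨i, rfl⟩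
        rw [← hx₀]
        exact Quotient.sound (Setoid.symm ⟨i.1, rfl⟩)
    rw [hset, Finset.card_image_of_injective _ hinj, Finset.card_univ, Fintype.card_fin]
  have hsum := Finset.card_eq_sum_card_fiberwise
    (f := fun x : T => Quotient.mk s x) (s := Finset.univ) (t := Finset.univ)
    (fun x _ => Finset.mem_univ _)
  rw [Nat.card_eq_fintype_card]
  show n ∣ Fintype.card T
  rw [← Finset.card_univ, hsum, Finset.sum_congr rfl (fun c _ => hfiber c),
    Finset.sum_const, smul_eq_mul]
  exact dvd_mul_left n _

lemma inner_moebius (n k : ℕ) (hn : 0 < n) (hk : 0 < k) :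
    (∑ d ∈ n.divisors, if k ∣ n / d then (ArithmeticFunction.moebius d : ℤ) else 0)
      = if k = n then 1 else 0 := by
  by_cases hkn : k ∣ n
  · have h1 : ∀ d ∈ n.divisors, (k ∣ n / d ↔ d ∈ (n / k).divisors) := by
      intro d hd
      rw [Nat.mem_divisors] at hd
      rw [Nat.mem_divisors]
      rw [Nat.dvd_div_iff_mul_dvd hd.1, Nat.dvd_div_iff_mul_dvd hkn]
      constructor
      · intro h
        refine ⟨by rwa [mul_comm] at h, ?_⟩
        have := Nat.div_pos (Nat.le_of_dvd hn hkn) hk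
        omega
      · intro h
        obtain ⟨h1', _⟩ := h
        rwa [mul_comm] at h1'
    calc (∑ d ∈ n.divisors, if k ∣ n / d then (ArithmeticFunction.moebius d : ℤ) else 0)
        = ∑ d ∈ n.divisors, if d ∈ (n / k).divisors then (ArithmeticFunction.moebius d : ℤ) else 0 := by
          exact Finset.sum_congr rfl fun d hd => if_congr (h1 d hd) rfl rfl
      _ = ∑ d ∈ n.divisors ∩ (n / k).divisors, (ArithmeticFunction.moebius d : ℤ) := by
          rw [Finset.sum_ite_mem]
      _ = ∑ d ∈ (n / k).divisors, (ArithmeticFunction.moebius d : ℤ) := by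
          congr 1
          apply Finset.inter_eq_right.mpr
          intro d hd
          rw [Nat.mem_divisors] at hd ⊢
          exact ⟨hd.1.trans (Nat.div_dvd_of_dvd hkn), by omega⟩
      _ = if n / k = 1 then 1 else 0 := moebius_sum_eq _ (by
          have := Nat.div_pos (Nat.le_of_dvd hn hkn) hk
          omega)
      _ = if k = n then 1 else 0 := by
          congr 1
          simp only [eq_iff_iff]
          constructor
          · intro h
            have h2 := Nat.mul_div_cancel' hkn
            rw [h, mul_one] at h2
            omega
          · intro h; subst h; exact Nat.div_self hk
  · rw [if_neg (fun h : k = n => hkn (h ▸ dvd_refl n))]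
    apply Finset.sum_eq_zero
    intro d hd
    rw [if_neg]
    intro hdvd
    exact hkn (hdvd.trans (Nat.div_dvd_of_dvd (Nat.mem_divisors.mp hd).1))

theorem perm_moebius_dvd {X : Type*} [Finite X] (σ : Equiv.Perm X) (n : ℕ) (hn : 0 < n) :
    (n : ℤ) ∣ ∑ d ∈ n.divisors, (ArithmeticFunction.moebius d : ℤ) *
      (Nat.card {x : X // (σ ^ (n / d)) x = x} : ℤ) := by
  classical
  cases nonempty_fintype X
  have hk : ∀ x : X, 0 < Function.minimalPeriod ⇑σ x := by
    intro x
    have h1 : Function.IsPeriodicPt ⇑σ (orderOf σ) x := by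
      show (⇑σ)^[orderOf σ] x = x
      rw [← Equiv.Perm.coe_pow, pow_orderOf_eq_one]
      rfl
    exact h1.minimalPeriod_pos (orderOf_pos σ)
  have hcard : ∀ m : ℕ, (Nat.card {x : X // (σ ^ m) x = x} : ℤ)
      = ∑ x : X, if Function.minimalPeriod ⇑σ x ∣ m then (1 : ℤ) else 0 := by
    intro m
    rw [Nat.card_eq_fintype_card, Fintype.card_subtype]
    rw [Finset.card_filter]
    push_cast
    refine Finset.sum_congr rfl fun x _ => ?_
    refine if_congr ?_ rfl rfl
    rw [← Function.isPeriodicPt_iff_minimalPeriod_dvd]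
    exact Iff.rfl
  have hmain : (∑ d ∈ n.divisors, (ArithmeticFunction.moebius d : ℤ) *
      (Nat.card {x : X // (σ ^ (n / d)) x = x} : ℤ))
      = (Nat.card {x : X // Function.minimalPeriod ⇑σ x = n} : ℤ) := by
   calc ∑ d ∈ n.divisors, (ArithmeticFunction.moebius d : ℤ) *
         (Nat.card {x : X // (σ ^ (n / d)) x = x} : ℤ)
       = ∑ d ∈ n.divisors, ∑ x : X,
           if Function.minimalPeriod ⇑σ x ∣ n / d then (ArithmeticFunction.moebius d : ℤ) else 0 := by
         refine Finset.sum_congr rfl fun d _ => ?_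
         rw [hcard, Finset.mul_sum]
         refine Finset.sum_congr rfl fun x _ => ?_
         rw [mul_ite, mul_one, mul_zero]
     _ = ∑ x : X, ∑ d ∈ n.divisors,
           if Function.minimalPeriod ⇑σ x ∣ n / d then (ArithmeticFunction.moebius d : ℤ) else 0 :=
         Finset.sum_comm
     _ = ∑ x : X, if Function.minimalPeriod ⇑σ x = n then (1 : ℤ) else 0 := by
         refine Finset.sum_congr rfl fun x _ => ?_
         exact inner_moebius n _ hn (hk x)
     _ = (Nat.card {x : X // Function.minimalPeriod ⇑σ x = n} : ℤ) := by
         rw [Nat.card_eq_fintype_card, Fintype.card_subtype, Finset.card_filter]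
         push_cast
         rfl
  rw [hmain]
  exact Int.natCast_dvd_natCast.mpr (dvd_card_least_period σ n hn)

end MoebiusDynamics

/-! ### Finite groups: twisted Burnside -/

section FiniteTwisted

open Finset Function MulAction

/-- Type synonym carrying the twisted conjugation action. -/
def TwK (K : Type*) [Group K] (_ψ : MulAut K) : Type _ := K

@[reducible] def unTw {K : Type*} [Group K] {ψ : MulAut K} (x : TwK K ψ) : K := x

variable {K : Type*} [Group K] (ψ : MulAut K)

instance : MulAction K (TwK K ψ) where
  smul g x := show K from g * unTw x * (ψ g)⁻¹
  one_smul x := by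
    show ((1 : K) * unTw x * (ψ 1)⁻¹ : K) = unTw x
    simp
  mul_smul g h x := by
    show ((g * h : K) * unTw x * (ψ (g * h))⁻¹ : K)
        = (g * ((h * unTw x * (ψ h)⁻¹ : K)) * (ψ g)⁻¹ : K)
    simp [mul_assoc]

lemma mem_twk_fixedBy_iff (a : K) (x : TwK K ψ) :
    x ∈ MulAction.fixedBy (TwK K ψ) a ↔ a * unTw x = unTw x * ψ a := by
  constructor
  · intro h
    have h' : (a * unTw x * (ψ a)⁻¹ : K) = unTw x := h
    rwa [mul_inv_eq_iff_eq_mul] at h'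
  · intro h
    show (a * unTw x * (ψ a)⁻¹ : K) = unTw x
    rwa [mul_inv_eq_iff_eq_mul]

lemma mem_conj_stab_iff (a : K) (u : ConjAct K) :
    u ∈ MulAction.stabilizer (ConjAct K) a ↔
      ConjAct.ofConjAct u * a = a * ConjAct.ofConjAct u := by
  rw [MulAction.mem_stabilizer_iff, ConjAct.smul_def, mul_inv_eq_iff_eq_mul]

/-- The permutation of conjugacy classes induced by an automorphism. -/
def conjPerm (ψ : MulAut K) : Equiv.Perm (ConjClasses K) where
  toFun := ConjClasses.map ψ.toMonoidHom
  invFun := ConjClasses.map ψ.symm.toMonoidHom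
  left_inv := fun C => by
    obtain ⟨a, rfl⟩ := ConjClasses.mk_surjective C
    show ConjClasses.mk (ψ.symm (ψ a)) = ConjClasses.mk a
    simp
  right_inv := fun C => by
    obtain ⟨a, rfl⟩ := ConjClasses.mk_surjective C
    show ConjClasses.mk (ψ (ψ.symm a)) = ConjClasses.mk a
    simp

lemma conjPerm_apply_mk (a : K) :
    conjPerm ψ (ConjClasses.mk a) = ConjClasses.mk (ψ a) := rfl

lemma conjPerm_pow_apply_mk (m : ℕ) (a : K) :
    (conjPerm ψ ^ m) (ConjClasses.mk a) = ConjClasses.mk ((ψ ^ m) a) := by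
  induction m generalizing a with
  | zero => simp
  | succ m ih =>
      rw [pow_succ, Equiv.Perm.mul_apply, conjPerm_apply_mk, ih (ψ a), pow_succ]
      rfl

lemma conjPerm_pow (m : ℕ) : conjPerm (ψ ^ m) = conjPerm ψ ^ m := by
  apply Equiv.ext
  intro C
  obtain ⟨a, rfl⟩ := ConjClasses.mk_surjective C
  rw [conjPerm_apply_mk, conjPerm_pow_apply_mk]

def fixEquivStab (a c : K) (hc' : c * ψ a = a * c) :
    (MulAction.fixedBy (TwK K ψ) a) ≃ (MulAction.stabilizer (ConjAct K) a) where
  toFun x := ⟨ConjAct.toConjAct (unTw x.1 * c⁻¹), by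
    rw [mem_conj_stab_iff, ConjAct.ofConjAct_toConjAct]
    have E1 : a * unTw x.1 = unTw x.1 * ψ a := (mem_twk_fixedBy_iff ψ a x.1).mp x.2
    have E3 : c⁻¹ * a = ψ a * c⁻¹ := by
      rw [inv_mul_eq_iff_eq_mul, ← mul_assoc, hc']
      simp
    rw [mul_assoc, E3, ← mul_assoc, ← E1, mul_assoc]⟩
  invFun z := ⟨show TwK K ψ from (ConjAct.ofConjAct z.1 * c : K), by
    rw [mem_twk_fixedBy_iff]
    show a * (ConjAct.ofConjAct z.1 * c) = (ConjAct.ofConjAct z.1 * c) * ψ a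
    have E4 : ConjAct.ofConjAct z.1 * a = a * ConjAct.ofConjAct z.1 :=
      (mem_conj_stab_iff a z.1).mp z.2
    rw [← mul_assoc, ← E4, mul_assoc, ← hc', ← mul_assoc]⟩
  left_inv x := by
    apply Subtype.ext
    show (ConjAct.ofConjAct (ConjAct.toConjAct (unTw x.1 * c⁻¹)) * c : K) = unTw x.1
    rw [ConjAct.ofConjAct_toConjAct, inv_mul_cancel_right]
  right_inv z := by
    apply Subtype.ext
    show ConjAct.toConjAct ((ConjAct.ofConjAct z.1 * c) * c⁻¹) = z.1
    rw [mul_inv_cancel_right, ConjAct.toConjAct_ofConjAct]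

variable [Finite K]

theorem finite_R_eq (ψ : MulAut K) :
    ReidemeisterNumber K ψ = Nat.card {C : ConjClasses K // conjPerm ψ C = C} := by
  classical
  letI : Fintype K := Fintype.ofFinite K
  haveI : Finite (TwK K ψ) := inferInstanceAs (Finite K)
  letI : Fintype (TwK K ψ) := Fintype.ofFinite _
  letI : ∀ a : K, Fintype (MulAction.fixedBy (TwK K ψ) a) := fun a => Fintype.ofFinite _
  letI : Fintype (Quotient (MulAction.orbitRel K (TwK K ψ))) := Fintype.ofFinite _
  letI : Fintype (ConjClasses K) := Fintype.ofFinite _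
  letI : Fintype (ConjAct K) := inferInstanceAs (Fintype K)
  have hcardConj : Fintype.card (ConjAct K) = Fintype.card K := rfl
  have hb := MulAction.sum_card_fixedBy_eq_card_orbits_mul_card_group K (TwK K ψ)
  have e1 : Quotient (MulAction.orbitRel K (TwK K ψ)) ≃ Quotient (twSetoid K ψ) := by
    refine Quotient.congr (show TwK K ψ ≃ K from Equiv.refl K) ?_
    intro x y
    rw [MulAction.orbitRel_apply, MulAction.mem_orbit_iff]
    constructor
    · rintro ⟨g, hg⟩
      have hg' : (g * unTw y * (ψ g)⁻¹ : K) = unTw x := hg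
      refine ⟨g⁻¹, ?_⟩
      show unTw y = g⁻¹ * unTw x * (ψ g⁻¹)⁻¹
      rw [← hg', map_inv]
      group
    · rintro ⟨g, hg⟩
      have hg' : unTw y = g * unTw x * (ψ g)⁻¹ := hg
      refine ⟨g⁻¹, ?_⟩
      show (g⁻¹ * unTw y * (ψ g⁻¹)⁻¹ : K) = unTw x
      rw [hg', map_inv]
      group
  have hclass : ∀ C : ConjClasses K,
      (∑ a ∈ Finset.univ.filter (fun a : K => ConjClasses.mk a = C),
        Fintype.card (MulAction.fixedBy (TwK K ψ) a))
      = if conjPerm ψ C = C then Fintype.card K else 0 := by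
    intro C
    obtain ⟨a₀, ha₀⟩ := ConjClasses.exists_rep C
    have hfilter : ∀ a : K, ConjClasses.mk a = C →
        (Finset.univ.filter (fun b : K => ConjClasses.mk b = C))
          = (MulAction.orbit (ConjAct K) a).toFinset := by
      intro a ha
      ext b
      simp only [Finset.mem_filter, Finset.mem_univ, true_and, Set.mem_toFinset,
        ConjAct.orbit_eq_carrier_conjClasses, ConjClasses.mem_carrier_iff_mk_eq, ha]
    by_cases hC : conjPerm ψ C = C
    · rw [if_pos hC]
      have ha₀F : a₀ ∈ Finset.univ.filter (fun b : K => ConjClasses.mk b = C) := by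
        simp [ha₀]
      have hcnt : ∀ a ∈ Finset.univ.filter (fun b : K => ConjClasses.mk b = C),
          Fintype.card (MulAction.fixedBy (TwK K ψ) a)
            * (Finset.univ.filter (fun b : K => ConjClasses.mk b = C)).card
          = Fintype.card K := by
        intro a haF
        have ha : ConjClasses.mk a = C := by simpa using haF
        have hconj : IsConj (ψ a) a := by
          apply ConjClasses.mk_eq_mk_iff_isConj.mp
          rw [← conjPerm_apply_mk ψ a, ha, hC]
        obtain ⟨c, hc⟩ := isConj_iff.mp hconj
        have hc' : c * ψ a = a * c := by rwa [mul_inv_eq_iff_eq_mul] at hc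
        have hos := MulAction.card_orbit_mul_card_stabilizer_eq_card_group (ConjAct K) a
        rw [hcardConj] at hos
        have hcard1 : Fintype.card (MulAction.fixedBy (TwK K ψ) a)
            = Fintype.card (MulAction.stabilizer (ConjAct K) a) :=
          Fintype.card_congr (fixEquivStab ψ a c hc')
        have hcard2 : (Finset.univ.filter (fun b : K => ConjClasses.mk b = C)).card
            = Fintype.card (MulAction.orbit (ConjAct K) a) := by
          rw [hfilter a ha, Set.toFinset_card]
        rw [hcard1, hcard2, mul_comm]
        exact hos
      have hFpos : 0 < (Finset.univ.filter (fun b : K => ConjClasses.mk b = C)).card :=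
        Finset.card_pos.mpr ⟨a₀, ha₀F⟩
      have hconst : ∀ a ∈ Finset.univ.filter (fun b : K => ConjClasses.mk b = C),
          Fintype.card (MulAction.fixedBy (TwK K ψ) a)
          = Fintype.card (MulAction.fixedBy (TwK K ψ) a₀) := by
        intro a haF
        exact Nat.eq_of_mul_eq_mul_right hFpos ((hcnt a haF).trans (hcnt a₀ ha₀F).symm)
      rw [Finset.sum_congr rfl hconst, Finset.sum_const, smul_eq_mul, mul_comm]
      exact hcnt a₀ ha₀F
    · rw [if_neg hC]
      apply Finset.sum_eq_zero
      intro a haF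
      have ha : ConjClasses.mk a = C := by simpa using haF
      rw [Fintype.card_eq_zero_iff]
      constructor
      intro x
      apply hC
      have E1 : a * unTw x.1 = unTw x.1 * ψ a := (mem_twk_fixedBy_iff ψ a x.1).mp x.2
      have hconj : IsConj a (ψ a) := by
        rw [isConj_iff]
        refine ⟨(unTw x.1)⁻¹, ?_⟩
        rw [inv_inv, mul_assoc, E1, ← mul_assoc, inv_mul_cancel, one_mul]
      rw [← ha, conjPerm_apply_mk]
      exact (ConjClasses.mk_eq_mk_iff_isConj.mpr hconj).symm
  have hB : (∑ a : K, Fintype.card (MulAction.fixedBy (TwK K ψ) a))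
      = (Finset.univ.filter (fun C : ConjClasses K => conjPerm ψ C = C)).card
        * Fintype.card K := by
    rw [← Finset.sum_fiberwise_of_maps_to (g := fun a : K => ConjClasses.mk a)
      (t := Finset.univ) (fun x _ => Finset.mem_univ _)]
    rw [Finset.sum_congr rfl (fun C _ => hclass C)]
    rw [Finset.sum_ite, Finset.sum_const, Finset.sum_const_zero, add_zero, smul_eq_mul]
  have hmain : Fintype.card (Quotient (MulAction.orbitRel K (TwK K ψ)))
      = (Finset.univ.filter (fun C : ConjClasses K => conjPerm ψ C = C)).card := by
    apply Nat.eq_of_mul_eq_mul_right (Fintype.card_pos (α := K))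
    rw [← hb, hB]
  rw [ReidemeisterNumber, ← Nat.card_congr e1, Nat.card_eq_fintype_card, hmain,
    Nat.card_eq_fintype_card, Fintype.card_subtype]

end FiniteTwisted

/-! ### Separability reduction -/

/-- Type-level version of `SepWitness`, extracted by choice. -/
structure SepData {G : Type*} [Group G] (φ : MulAut G) (x y : G) where
  (K : Type) [grp : Group K] [fin : Finite K] (φK : MulAut K) (F : G →* K)
  (surj : Function.Surjective F) (comm : ∀ g : G, F (φ g) = φK (F g))
  (sep : ¬ TwistedConj φK (F x) (F y))

attribute [instance] SepData.grp SepData.fin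

lemma sepWitness_nonempty {G : Type*} [Group G] {φ : MulAut G} {x y : G}
    (h : SepWitness φ x y) : Nonempty (SepData φ x y) := by
  cases h with
  | @intro K grp fin φK F surj comm sep => exact ⟨⟨K, φK, F, surj, comm, sep⟩⟩

universe u_good in
set_option maxHeartbeats 1000000 in
theorem exists_good_quotient {G : Type u_good} [Group G] (φ : MulAut G) (hsep : TwistedConjSep G)
    (hfin : ∀ n : ℕ, 0 < n → Finite (Quotient (twSetoid G (φ ^ n)))) (n : ℕ) (hn : 0 < n) :
    ∃ (K : Type u_good) (_ : Group K) (_ : Finite K) (ψ : MulAut K),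
      ∀ m ∈ n.divisors, ReidemeisterNumber G (φ ^ m) = ReidemeisterNumber K (ψ ^ m) := by
  classical
  haveI hQfin : ∀ m : {m : ℕ // m ∈ n.divisors},
      Finite (Quotient (twSetoid G (φ ^ (m.1 : ℕ)))) :=
    fun m => hfin m.1 (Nat.pos_of_mem_divisors m.2)
  let I : Type _ := Σ m : {m : ℕ // m ∈ n.divisors},
      {p : Quotient (twSetoid G (φ ^ (m.1 : ℕ))) × Quotient (twSetoid G (φ ^ (m.1 : ℕ))) //
        p.1 ≠ p.2}
  haveI : Finite I := by
    haveI : ∀ m : {m : ℕ // m ∈ n.divisors},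
        Finite ({p : Quotient (twSetoid G (φ ^ (m.1 : ℕ))) ×
          Quotient (twSetoid G (φ ^ (m.1 : ℕ))) // p.1 ≠ p.2}) := fun m => Subtype.finite
    exact Finite.instSigma
  have hda : ∀ i : I, Nonempty
      (SepData (φ ^ (i.1.1 : ℕ)) (Quotient.out i.2.1.1) (Quotient.out i.2.1.2)) := by
    intro i
    apply sepWitness_nonempty
    apply hsep (φ ^ (i.1.1 : ℕ)) (hQfin i.1)
    intro hcon
    apply i.2.2
    have h1 : (⟦Quotient.out i.2.1.1⟧ : Quotient (twSetoid G (φ ^ (i.1.1 : ℕ))))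
        = ⟦Quotient.out i.2.1.2⟧ := Quotient.sound hcon
    rwa [Quotient.out_eq, Quotient.out_eq] at h1
  let D : ∀ i : I, SepData (φ ^ (i.1.1 : ℕ)) (Quotient.out i.2.1.1) (Quotient.out i.2.1.2) :=
    fun i => (hda i).some
  let N : Subgroup G := ⨅ (j : Fin n), ⨅ (i : I),
    ((D i).F.comp ((φ ^ (j : ℕ)) : MulAut G).toMonoidHom).ker
  have hmemN : ∀ g : G, g ∈ N ↔ ∀ (j : Fin n) (i : I), (D i).F ((φ ^ (j : ℕ)) g) = 1 := by
    intro g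
    simp only [N, Subgroup.mem_iInf, MonoidHom.mem_ker, MonoidHom.comp_apply,
      MulEquiv.coe_toMonoidHom]
  have hker_shift : ∀ (i : I) (g : G), (D i).F ((φ ^ n) g) = 1 ↔ (D i).F g = 1 := by
    intro i g
    obtain ⟨t, ht⟩ : (i.1.1 : ℕ) ∣ n := (Nat.mem_divisors.mp i.1.2).1
    have hpow : ∀ (s : ℕ) (h : G), (D i).F ((φ ^ ((i.1.1 : ℕ) * s)) h)
        = ((D i).φK ^ s) ((D i).F h) := by
      intro s
      induction s with
      | zero => intro h; simp
      | succ s ih =>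
          intro h
          have hexp : (i.1.1 : ℕ) * (s + 1) = (i.1.1 : ℕ) * s + (i.1.1 : ℕ) := by ring
          rw [hexp, pow_add, MulAut.mul_apply, ih, (D i).comm, pow_succ, MulAut.mul_apply]
    have h3 := hpow t g
    rw [← ht] at h3
    rw [h3]
    constructor
    · intro h
      have h2 := congrArg (((D i).φK ^ t).symm) h
      simpa using h2
    · intro h; rw [h]; simp
  have hmemN' : ∀ g : G, g ∈ N ↔ ∀ (j : ℕ) (i : I), (D i).F ((φ ^ j) g) = 1 := by
    intro g
    rw [hmemN g]
    constructor
    · intro H j i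
      have hstep : ∀ (q : ℕ) (h : G), (D i).F ((φ ^ (n * q)) h) = 1 ↔ (D i).F h = 1 := by
        intro q
        induction q with
        | zero => intro h; simp
        | succ q ih =>
            intro h
            have he : n * (q + 1) = n * q + n := by ring
            rw [he, pow_add, MulAut.mul_apply, ih ((φ ^ n) h), hker_shift i h]
      have hmod : j % n < n := Nat.mod_lt _ hn
      have h1 := H ⟨j % n, hmod⟩ i
      have h2 : (φ ^ j) g = (φ ^ (n * (j / n))) ((φ ^ (j % n)) g) := by
        rw [← MulAut.mul_apply, ← pow_add, Nat.div_add_mod]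
      rw [h2, hstep (j / n) _]
      exact h1
    · intro H j i
      exact H j.1 i
  haveI hNnormal : N.Normal := by
    constructor
    intro g hg h
    rw [hmemN'] at hg ⊢
    intro j i
    simp only [map_mul, map_inv]
    rw [hg j i]
    simp
  have hNinv : ∀ g : G, φ g ∈ N ↔ g ∈ N := by
    intro g
    rw [hmemN' (φ g), hmemN' g]
    have hco : ∀ (k : ℕ), (φ ^ k) (φ g) = (φ ^ (k + 1)) g := by
      intro k
      rw [pow_succ, MulAut.mul_apply]
    constructor
    · intro H j i
      have h1 := H (j + n - 1) i
      rw [hco, (by omega : j + n - 1 + 1 = n + j), pow_add, MulAut.mul_apply] at h1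
      exact (hker_shift i ((φ ^ j) g)).mp h1
    · intro H j i
      rw [hco j]
      exact H (j + 1) i
  haveI hFI : N.FiniteIndex := by
    apply Subgroup.finiteIndex_iInf
    intro j
    apply Subgroup.finiteIndex_iInf
    intro i
    have hsurj : Function.Surjective ((D i).F.comp ((φ ^ (j : ℕ) : MulAut G)).toMonoidHom) := by
      intro k
      obtain ⟨g, hg⟩ := (D i).surj k
      exact ⟨((φ ^ (j : ℕ)) : MulAut G).symm g, by simpa using hg⟩
    haveI : Finite (G ⧸ ((D i).F.comp ((φ ^ (j : ℕ) : MulAut G)).toMonoidHom).ker) :=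
      Finite.of_equiv _ (QuotientGroup.quotientKerEquivOfSurjective _ hsurj).symm.toEquiv
    exact Subgroup.finiteIndex_of_finite_quotient
  haveI hKfin : Finite (G ⧸ N) := Subgroup.finite_quotient_of_finiteIndex
  have hmapN : Subgroup.map (φ : G ≃* G).toMonoidHom N = N := by
    ext x
    rw [Subgroup.mem_map_equiv]
    have h2 := hNinv (φ.symm x)
    rw [MulEquiv.apply_symm_apply] at h2
    exact h2.symm
  let ψ : MulAut (G ⧸ N) := QuotientGroup.congr N N (φ : G ≃* G) hmapN
  let π : G →* G ⧸ N := QuotientGroup.mk' N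
  have hψπ : ∀ g : G, ψ (π g) = π (φ g) := fun g =>
    QuotientGroup.congr_mk N N (φ : G ≃* G) hmapN g
  have hψpow : ∀ (m : ℕ) (g : G), (ψ ^ m) (π g) = π ((φ ^ m) g) := by
    intro m
    induction m with
    | zero => intro g; simp
    | succ m ih =>
        intro g
        rw [pow_succ', MulAut.mul_apply, ih g, hψπ ((φ ^ m) g), ← MulAut.mul_apply, ← pow_succ']
  have hsepK : ∀ i : I, ¬ TwistedConj (ψ ^ (i.1.1 : ℕ))
      (π (Quotient.out i.2.1.1)) (π (Quotient.out i.2.1.2)) := by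
    rintro i ⟨c, hc⟩
    obtain ⟨g, rfl⟩ := QuotientGroup.mk'_surjective N c
    rw [hψpow] at hc
    have hc2 : π (Quotient.out i.2.1.2)
        = π (g * Quotient.out i.2.1.1 * ((φ ^ (i.1.1 : ℕ)) g)⁻¹) := by
      rw [map_mul, map_mul, map_inv]
      exact hc
    have hu : (g * Quotient.out i.2.1.1 * ((φ ^ (i.1.1 : ℕ)) g)⁻¹)⁻¹
        * Quotient.out i.2.1.2 ∈ N := by
      apply QuotientGroup.eq.mp
      exact hc2.symm
    have hFu : (D i).F ((g * Quotient.out i.2.1.1 * ((φ ^ (i.1.1 : ℕ)) g)⁻¹)⁻¹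
        * Quotient.out i.2.1.2) = 1 := by
      have h4 := (hmemN' _).mp hu 0 i
      simpa using h4
    apply (D i).sep
    refine ⟨(D i).F g, ?_⟩
    have hb : Quotient.out i.2.1.2
        = (g * Quotient.out i.2.1.1 * ((φ ^ (i.1.1 : ℕ)) g)⁻¹)
          * ((g * Quotient.out i.2.1.1 * ((φ ^ (i.1.1 : ℕ)) g)⁻¹)⁻¹ * Quotient.out i.2.1.2) := by
      group
    have h5 := congrArg (D i).F hb
    rw [map_mul, hFu, mul_one] at h5
    simp only [map_mul, map_inv] at h5
    rw [(D i).comm g] at h5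
    exact h5
  refine ⟨G ⧸ N, inferInstance, hKfin, ψ, ?_⟩
  intro m hm
  have hrespect : ∀ x y : G, TwistedConj (φ ^ m) x y → TwistedConj (ψ ^ m) (π x) (π y) := by
    rintro x y ⟨g, rfl⟩
    exact ⟨π g, by rw [map_mul, map_mul, map_inv, hψpow]⟩
  let θ : Quotient (twSetoid G (φ ^ m)) → Quotient (twSetoid (G ⧸ N) (ψ ^ m)) :=
    Quotient.map π hrespect
  have hθsurj : Function.Surjective θ := by
    intro c
    obtain ⟨k, rfl⟩ := Quotient.exists_rep c
    obtain ⟨g, rfl⟩ := QuotientGroup.mk'_surjective N k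
    exact ⟨⟦g⟧, rfl⟩
  have hθinj : Function.Injective θ := by
    intro a b hab
    by_contra hne
    have hsep2 := hsepK ⟨⟨m, hm⟩, ⟨(a, b), hne⟩⟩
    apply hsep2
    have h2 : (⟦π (Quotient.out a)⟧ : Quotient (twSetoid (G ⧸ N) (ψ ^ m)))
        = ⟦π (Quotient.out b)⟧ := by
      show θ ⟦Quotient.out a⟧ = θ ⟦Quotient.out b⟧
      rw [Quotient.out_eq, Quotient.out_eq]
      exact hab
    exact Quotient.exact h2
  exact Nat.card_eq_of_bijective θ ⟨hθinj, hθsurj⟩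

/-- Congruences for Reidemeister numbers: if `φ` is an automorphism of a countable
discrete twisted conjugacy separable group `G` such that all numbers `R(φⁿ)` are
finite, then for all `n ≥ 1` one has `∑_{d ∣ n} μ(d) · R(φ^{n/d}) ≡ 0 (mod n)`. -/
theorem reidemeister_congruences
    {G : Type*} [Group G] [Countable G] (φ : MulAut G)
    (hsep : TwistedConjSep G)
    (hfin : ∀ n : ℕ, 0 < n → Finite (Quotient (twSetoid G (φ ^ n)))) :
    ∀ n : ℕ, 0 < n →
      (n : ℤ) ∣ ∑ d ∈ n.divisors,
        ArithmeticFunction.moebius d * (ReidemeisterNumber G (φ ^ (n / d)) : ℤ) := by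
  intro n hn
  obtain ⟨K, instG, instF, ψ, hK⟩ := exists_good_quotient φ hsep hfin n hn
  haveI : Finite (ConjClasses K) := Quotient.finite _
  have hterm : ∀ d ∈ n.divisors,
      (ArithmeticFunction.moebius d : ℤ) * (ReidemeisterNumber G (φ ^ (n / d)) : ℤ)
      = (ArithmeticFunction.moebius d : ℤ) *
        (Nat.card {C : ConjClasses K // ((conjPerm ψ) ^ (n / d)) C = C} : ℤ) := by
    intro d hd
    have hd' : n / d ∈ n.divisors :=
      Nat.mem_divisors.mpr ⟨Nat.div_dvd_of_dvd (Nat.mem_divisors.mp hd).1, by omega⟩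
    rw [hK _ hd', finite_R_eq (ψ ^ (n / d)), conjPerm_pow]
  rw [Finset.sum_congr rfl hterm]
  exact perm_moebius_dvd (conjPerm ψ) n hn
end
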